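/- Let L be an n×n real matrix such that L_ii > 0 for all i, L_ij ≤ 0 for i ≠ j, every row sum of L is nonnegative, and for every nonempty subset S of indices the principal submatrix of L on S has at least one row whose entries sum to a strictly positive number. Then L is invertible and every entry of L⁻¹ is nonnegative. -/

import Mathlib

open Finset

theorem stmt0 {n : ℕ} (L : Matrix (Fin n) (Fin n) ℝ)
    (hdiag : ∀ i, 0 < L i i)
    (hoff : ∀ i j, i ≠ j → L i j ≤ 0)
    (hrow : ∀ i, 0 ≤ ∑ j, L i j)
    (hsub : ∀ S : Finset (Fin n), S.Nonempty → ∃ i ∈ S, 0 < ∑ j ∈ S, L i j) :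
    IsUnit L ∧ ∀ i j, 0 ≤ L⁻¹ i j := by
  -- key monotonicity lemma
  have mono : ∀ x : Fin n → ℝ, (∀ i, 0 ≤ L.mulVec x i) → ∀ i, 0 ≤ x i := by
    intro x hx
    by_contra hneg
    push_neg at hneg
    obtain ⟨k, hk⟩ := hneg
    have hne : (univ : Finset (Fin n)).Nonempty := ⟨k, mem_univ k⟩
    set m := univ.inf' hne x with hm
    have hmle : ∀ j, m ≤ x j := fun j => inf'_le x (mem_univ j)
    have hmneg : m < 0 := lt_of_le_of_lt (hmle k) hk
    set S : Finset (Fin n) := univ.filter (fun j => x j = m) with hSdef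
    have hSne : S.Nonempty := by
      obtain ⟨j, _, hj⟩ := exists_mem_eq_inf' hne x
      exact ⟨j, by simp [hSdef, hj.symm, hm]⟩
    obtain ⟨i, hiS, hiSum⟩ := hsub S hSne
    have hxi : x i = m := (mem_filter.mp hiS).2
    have hoffS : ∀ j ∈ Sᶜ, L i j ≤ 0 := by
      intro j hj
      have hjm : x j ≠ m := by
        intro h; exact (mem_compl.mp hj) (mem_filter.mpr ⟨mem_univ j, h⟩)
      exact hoff i j (fun h => hjm (h ▸ hxi))
    have htermle : ∀ j ∈ Sᶜ, L i j * x j ≤ L i j * m :=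
      fun j hj => mul_le_mul_of_nonpos_left (hmle j) (hoffS j hj)
    have hsplit : L.mulVec x i = (∑ j ∈ S, L i j) * m + ∑ j ∈ Sᶜ, L i j * x j := by
      rw [Matrix.mulVec, dotProduct,
        ← Finset.sum_add_sum_compl S (fun j => L i j * x j), Finset.sum_mul]
      congr 1
      exact Finset.sum_congr rfl (fun j hj => by rw [(mem_filter.mp hj).2])
    have hAB : ∑ j ∈ Sᶜ, L i j * x j ≤ ∑ j ∈ Sᶜ, L i j * m := sum_le_sum htermle
    have hrowsplit : (∑ j ∈ S, L i j) * m + ∑ j ∈ Sᶜ, L i j * m = (∑ j, L i j) * m := by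
      rw [← Finset.sum_mul, ← add_mul, Finset.sum_add_sum_compl]
    have hrm : (∑ j, L i j) * m ≤ 0 := mul_nonpos_of_nonneg_of_nonpos (hrow i) hmneg.le
    have h0 : 0 ≤ (∑ j ∈ S, L i j) * m + ∑ j ∈ Sᶜ, L i j * x j := hsplit ▸ hx i
    -- equality forced
    have hAeqB : ∑ j ∈ Sᶜ, L i j * x j = ∑ j ∈ Sᶜ, L i j * m := by
      have : (∑ j ∈ S, L i j) * m + ∑ j ∈ Sᶜ, L i j * m ≤ 0 := hrowsplit ▸ hrm
      linarith
    have hterm : ∀ j ∈ Sᶜ, L i j * x j = L i j * m := by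
      have h := (Finset.sum_eq_sum_iff_of_le htermle).1 hAeqB
      intro j hj; exact h j hj
    have hLzero : ∀ j ∈ Sᶜ, L i j = 0 := by
      intro j hj
      have hjm : x j ≠ m := by
        intro h; exact (mem_compl.mp hj) (mem_filter.mpr ⟨mem_univ j, h⟩)
      have := hterm j hj
      rcases mul_eq_mul_left_iff.mp this with h | h
      · exact absurd h hjm
      · exact h
    have hcompl : ∑ j ∈ Sᶜ, L i j = 0 := Finset.sum_eq_zero hLzero
    have hrow0 : (∑ j, L i j) = ∑ j ∈ S, L i j := by
      rw [← Finset.sum_add_sum_compl S (fun j => L i j), hcompl, add_zero]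
    -- now 0 ≤ m∑S + ∑compl x ≤ m∑S + m∑compl = m * rowsum = m * ∑S < 0
    have : (∑ j, L i j) * m < 0 := mul_neg_of_pos_of_neg (hrow0 ▸ hiSum) hmneg
    linarith [hAeqB ▸ h0, hrowsplit]
  -- injectivity ⇒ unit
  have hker : ∀ x : Fin n → ℝ, L.mulVec x = 0 → x = 0 := by
    intro x hx
    have h1 := mono x (fun i => by rw [hx]; exact le_refl 0)
    have h2 := mono (-x) (fun i => by
      rw [Matrix.mulVec_neg, hx]; simp)
    funext i
    have := h2 i
    simp only [Pi.neg_apply, Left.nonneg_neg_iff] at this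
    exact le_antisymm this (h1 i)
  have hinj : Function.Injective L.mulVec := by
    intro x y hxy
    have : L.mulVec (x - y) = 0 := by
      rw [Matrix.mulVec_sub, hxy, sub_self]
    have := hker _ this
    exact sub_eq_zero.mp this
  have hunit : IsUnit L := Matrix.mulVec_injective_iff_isUnit.mp hinj
  refine ⟨hunit, fun i j => ?_⟩
  have hmul : L * L⁻¹ = 1 :=
    Matrix.mul_nonsing_inv L ((Matrix.isUnit_iff_isUnit_det L).mp hunit)
  have := mono (fun k => L⁻¹ k j) (fun i' => by
    have : L.mulVec (fun k => L⁻¹ k j) i' = (L * L⁻¹) i' j := by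
      simp [Matrix.mulVec, dotProduct, Matrix.mul_apply]
    rw [this, hmul]
    by_cases h : i' = j <;> simp [Matrix.one_apply, h])
  exact this i
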